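/- The Atomic Permanence axiom is sound: for every state model S, every state s, every action type σ_i with precondition sentence ψ_i, and every atomic sentence p, s satisfies [σ_i ψ⃗]p if and only if s satisfies ψ_i → p. -/
import Mathlib


structure StateModel (Agent Atom : Type) where
  World : Type
  rel : Agent → World → World → Prop
  val : Atom → World → Prop

/-- An epistemic proposition assigns to each state model a set of its worlds. -/
def EProp (Agent Atom : Type) := (S : StateModel Agent Atom) → Set S.World

/-- The update product `S ⊗ Σ` for a signature-based program model: action
types are `Fin n` with accessibility `srel` and preconditions `ψ`; the new
states are pairs `(s, σⱼ)` with `s ∈ ⟦ψⱼ⟧_S`, with product accessibility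
relations and valuation inherited from `S`. -/
def prodModel {Agent Atom : Type} {n : ℕ} (S : StateModel Agent Atom)
    (srel : Agent → Fin n → Fin n → Prop) (ψ : Fin n → EProp Agent Atom) :
    StateModel Agent Atom where
  World := {x : S.World × Fin n // x.1 ∈ ψ x.2 S}
  rel A x y := S.rel A x.1.1 y.1.1 ∧ srel A x.1.2 y.1.2
  val p x := S.val p x.1.1

/-- Soundness of Atomic Permanence: `[σᵢ ψ⃗]p ↔ (ψᵢ → p)`.  The update induced
by `σᵢ ψ⃗` relates `s` exactly to the states `t = (s, σᵢ)` of `S ⊗ Σ`. -/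
theorem atomic_permanence_sound {Agent Atom : Type} {n : ℕ}
    (S : StateModel Agent Atom) (srel : Agent → Fin n → Fin n → Prop)
    (ψ : Fin n → EProp Agent Atom) (i : Fin n) (s : S.World) (p : Atom) :
    (∀ t : (prodModel S srel ψ).World, t.1 = (s, i) → (prodModel S srel ψ).val p t)
      ↔ (s ∈ ψ i S → S.val p s) := by
  constructor
  · intro h hs
    exact h ⟨(s, i), hs⟩ rfl
  · rintro h ⟨⟨t, j⟩, ht⟩ heq
    obtain ⟨rfl, rfl⟩ := Prod.mk.injEq .. ▸ heq
    exact h ht
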